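/- Let A be a unital ring (or algebra), a, b ∈ A, t₁, t₂, ρ scalars, and suppose 1 − t₁a and 1 − t₂b are invertible. Set a(t₁) = (1 − t₁a)^{-1} − h_a·1 and b(t₂) = (1 − t₂b)^{-1} − h_b·1 where h_a, h_b are arbitrary scalars. Then (1 − t₁a)(1 − ρ a(t₁)b(t₂))(1 − t₂b) = c₀ + c₁a + c₂b + c₃ab, where c₀ = 1 − ρ(h_a − 1)(h_b − 1), c₁ = −t₁(1 + ρh_a − ρh_a h_b), c₂ = −t₂(1 + ρh_b − ρh_a h_b), and c₃ = t₁t₂(1 − ρh_a h_b). -/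

import Mathlib

/-- Haagerup-type algebraic identity. In a unital ℂ-algebra, with
`1 - t₁ • a` and `1 - t₂ • b` invertible,
`a(t₁) = (1 - t₁a)⁻¹ - h_a·1`, `b(t₂) = (1 - t₂b)⁻¹ - h_b·1`, one has
`(1 - t₁a)(1 - ρ a(t₁)b(t₂))(1 - t₂b) = c₀·1 + c₁·a + c₂·b + c₃·(ab)` with the
stated coefficients, for arbitrary scalars `h_a, h_b, ρ`. -/
theorem stmt_4 {A : Type*} [Ring A] [Algebra ℂ A] (a b : A)
    (t₁ t₂ ρ ha hb : ℂ)
    (hua : IsUnit (1 - t₁ • a)) (hub : IsUnit (1 - t₂ • b)) :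
    let at₁ : A := Ring.inverse (1 - t₁ • a) - ha • (1 : A)
    let bt₂ : A := Ring.inverse (1 - t₂ • b) - hb • (1 : A)
    let c₀ : ℂ := 1 - ρ * (ha - 1) * (hb - 1)
    let c₁ : ℂ := -t₁ * (1 + ρ * ha - ρ * ha * hb)
    let c₂ : ℂ := -t₂ * (1 + ρ * hb - ρ * ha * hb)
    let c₃ : ℂ := t₁ * t₂ * (1 - ρ * ha * hb)
    (1 - t₁ • a) * (1 - ρ • (at₁ * bt₂)) * (1 - t₂ • b) =
      c₀ • (1 : A) + c₁ • a + c₂ • b + c₃ • (a * b) := by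
  intro at₁ bt₂ c₀ c₁ c₂ c₃
  set u : A := 1 - t₁ • a with hu
  set v : A := 1 - t₂ • b with hv
  have hup : u * Ring.inverse u = 1 := Ring.mul_inverse_cancel _ hua
  have hqv : Ring.inverse v * v = 1 := Ring.inverse_mul_cancel _ hub
  have h1 : u * at₁ = 1 - ha • u := by
    simp [at₁, mul_sub, hup, mul_smul_comm, ← hu]
  have h2 : bt₂ * v = 1 - hb • v := by
    simp [bt₂, sub_mul, hqv, smul_mul_assoc, ← hv]
  have key : u * (1 - ρ • (at₁ * bt₂)) * v =
      u * v - ρ • ((1 - ha • u) * (1 - hb • v)) := by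
    have : u * (at₁ * bt₂) * v = (u * at₁) * (bt₂ * v) := by
      noncomm_ring
    calc u * (1 - ρ • (at₁ * bt₂)) * v
        = u * v - ρ • (u * (at₁ * bt₂) * v) := by
          simp [mul_sub, sub_mul, mul_smul_comm, smul_mul_assoc]
      _ = u * v - ρ • ((u * at₁) * (bt₂ * v)) := by rw [this]
      _ = u * v - ρ • ((1 - ha • u) * (1 - hb • v)) := by rw [h1, h2]
  rw [key, hu, hv]
  simp only [c₀, c₁, c₂, c₃, mul_sub, sub_mul, smul_sub, smul_smul, mul_one, one_mul,
    mul_smul_comm, smul_mul_assoc]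
  match_scalars <;> ring
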